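/- The common substring search between the rotations/inverses of two relators decomposes as: ComStr(R_p, R_t) succeeds iff com_substr(R_p', R_t') or com_substr(R_p⁻¹', R_t') succeeds, where R' denotes the extension of R by its first ⌈(l_p+1)/2⌉ symbols. Formal version: there exist rotations ρ_i(R_p) (or a formal inverse thereof) and ρ_j(R_t) sharing a common substring of length k ≤ ⌈(l_p+1)/2⌉ iff the extensions R_p ++ take ⌈(l_p+1)/2⌉ R_p (or its formal inverse analog) and R_t ++ take ⌈(l_p+1)/2⌉ R_t share a common substring of length k. -/

import Mathlib

section Helpers

variable {α : Type*}

private lemma rot_infix (R : List α) (i : ℕ) : R.drop i ++ R.take i <:+: R ++ R := by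
  refine ⟨R.take i, R.drop i, ?_⟩
  conv_rhs => rw [← List.take_append_drop i R]
  simp only [List.append_assoc]

private lemma infix_left_of_big {R v s t : List α} (heq : s ++ v ++ t = R ++ R)
    (hs : R.length ≤ s.length) : v <:+: R := by
  refine ⟨s.drop R.length, t, ?_⟩
  have h := congrArg (List.drop R.length) heq
  rw [List.append_assoc, List.drop_append, Nat.sub_eq_zero_of_le hs,
    List.drop_zero, List.drop_left] at h
  rw [List.append_assoc, h]

private lemma shrink {R v : List α} {m : ℕ} (h : v <:+: R ++ R) (hv : v.length ≤ m) :
    v <:+: R ++ R.take m := by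
  obtain ⟨s, t, heq⟩ := h
  by_cases hs : R.length ≤ s.length
  · exact (infix_left_of_big heq hs).trans (List.prefix_append R (R.take m)).isInfix
  · push_neg at hs
    have hpre : s ++ v <+: R ++ R := ⟨t, heq⟩
    have hpre2 : s ++ v <+: (R ++ R).take (R.length + m) := by
      refine List.prefix_take_iff.mpr ⟨hpre, ?_⟩
      simp only [List.length_append]
      omega
    rw [List.take_length_add_append] at hpre2
    exact ((List.suffix_append s v).isInfix).trans hpre2.isInfix

private lemma grow {R v : List α} {m : ℕ} (h : v <:+: R ++ R.take m) : v <:+: R ++ R := by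
  refine h.trans ⟨[], R.drop m, ?_⟩
  simp [List.append_assoc]

private lemma toRot {R v : List α} (h : v <:+: R ++ R) (hv : v.length ≤ R.length) :
    ∃ i, v <:+: R.drop i ++ R.take i := by
  obtain ⟨s, t, heq⟩ := h
  by_cases hs : R.length ≤ s.length
  · exact ⟨0, by simpa using infix_left_of_big heq hs⟩
  · push_neg at hs
    refine ⟨s.length, ?_⟩
    have hdrop : (R ++ R).drop s.length = v ++ t := by
      rw [← heq, List.append_assoc, List.drop_left]
    have hpre : v <+: (R ++ R).drop s.length := by
      rw [hdrop]; exact List.prefix_append v t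
    have hpre2 : v <+: ((R ++ R).drop s.length).take R.length :=
      List.prefix_take_iff.mpr ⟨hpre, hv⟩
    have hcalc : ((R ++ R).drop s.length).take R.length = R.drop s.length ++ R.take s.length := by
      rw [List.drop_append, Nat.sub_eq_zero_of_le (le_of_lt hs), List.drop_zero,
        List.take_append, List.take_of_length_le (by simp),
        List.length_drop]
      congr 2
      omega
    rw [hcalc] at hpre2
    exact hpre2.isInfix

private lemma rot_min (R : List α) (i : ℕ) :
    R.drop i ++ R.take i = R.drop (min i R.length) ++ R.take (min i R.length) := by
  rcases le_total i R.length with h | h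
  · rw [min_eq_left h]
  · rw [min_eq_right h, List.drop_of_length_le h, List.take_of_length_le h,
      List.drop_length, List.take_length]

private lemma rot_inv_eq (inv : α → α) (R : List α) (i : ℕ) :
    ((R.drop i ++ R.take i).map inv).reverse =
      ((R.map inv).reverse).drop (R.length - i) ++ ((R.map inv).reverse).take (R.length - i) := by
  rw [List.map_append, List.reverse_append, List.map_take, List.map_drop,
    List.reverse_take, List.reverse_drop, List.length_map]

end Helpers

theorem comStr_decomposition {α : Type*} (inv : α → α) (hinv : Function.Involutive inv)
    (Rp Rt : List α) (hlen : Rp.length ≤ Rt.length) (k : ℕ)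
    (hk : k ≤ (Rp.length + 2) / 2) :
    (∃ (i j : ℕ) (v : List α), v.length = k ∧
        (v <:+: Rp.drop i ++ Rp.take i ∨
          v <:+: ((Rp.drop i ++ Rp.take i).map inv).reverse) ∧
        v <:+: Rt.drop j ++ Rt.take j) ↔
      (∃ v : List α, v.length = k ∧
        (v <:+: Rp ++ Rp.take ((Rp.length + 2) / 2) ∨
          v <:+: (Rp.map inv).reverse ++ ((Rp.map inv).reverse).take ((Rp.length + 2) / 2)) ∧
        v <:+: Rt ++ Rt.take ((Rp.length + 2) / 2)) := by
  set m := (Rp.length + 2) / 2 with hm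
  set Q := (Rp.map inv).reverse with hQ
  rcases Nat.eq_zero_or_pos k with hk0 | hkpos
  · subst hk0
    constructor
    · intro _
      exact ⟨[], rfl, Or.inl List.nil_infix, List.nil_infix⟩
    · intro _
      exact ⟨0, 0, [], rfl, Or.inl List.nil_infix, List.nil_infix⟩
  rcases Nat.eq_zero_or_pos Rp.length with hp0 | hppos
  · have hRp : Rp = [] := List.eq_nil_of_length_eq_zero hp0
    subst hRp
    have hQnil : Q = [] := by simp [hQ]
    constructor
    · rintro ⟨i, j, v, hv, hvp | hvp, hvt⟩
      · have hvnil : v = [] := by simpa using hvp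
        simp [hvnil] at hv
        omega
      · have hvnil : v = [] := by simpa using hvp
        simp [hvnil] at hv
        omega
    · rintro ⟨v, hv, hvp | hvp, hvt⟩
      · have hvnil : v = [] := by simpa using hvp
        simp [hvnil] at hv
        omega
      · have hvnil : v = [] := by simpa [hQnil] using hvp
        simp [hvnil] at hv
        omega
  · have hkRp : k ≤ Rp.length := by omega
    have hkRt : k ≤ Rt.length := le_trans hkRp hlen
    have hQlen : Q.length = Rp.length := by simp [hQ]
    constructor
    · rintro ⟨i, j, v, hv, hvp | hvp, hvt⟩
      · exact ⟨v, hv, Or.inl (shrink (hvp.trans (rot_infix _ _)) (by omega)),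
          shrink (hvt.trans (rot_infix _ _)) (by omega)⟩
      · rw [rot_inv_eq inv Rp i] at hvp
        refine ⟨v, hv, Or.inr (shrink (hvp.trans (rot_infix Q _)) (by omega)),
          shrink (hvt.trans (rot_infix _ _)) (by omega)⟩
    · rintro ⟨v, hv, hvp | hvp, hvt⟩
      · obtain ⟨i, hi⟩ := toRot (grow hvp) (by omega)
        obtain ⟨j, hj⟩ := toRot (grow hvt) (by omega)
        exact ⟨i, j, v, hv, Or.inl hi, hj⟩
      · obtain ⟨j', hi⟩ := toRot (grow hvp) (by omega)
        obtain ⟨j, hj⟩ := toRot (grow hvt) (by omega)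
        refine ⟨Rp.length - min j' Q.length, j, v, hv, Or.inr ?_, hj⟩
        rw [rot_inv_eq inv Rp _]
        rw [rot_min Q j'] at hi
        have : Rp.length - (Rp.length - min j' Q.length) = min j' Q.length := by
          have := min_le_right j' Q.length
          omega
        rw [this]
        exact hi
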